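/- Let K be a commutative ring and a_{ij} ∈ K for every edge (i,j) ∈ E. Let Δ be the (untwisted) Laplacian, i.e., the n×n matrix with Δ_{ij} = −a_{ij} for i ≠ j and Δ_{ii} = Σ_{j≠i} a_{ij}. Then the ordinary determinant of the top-left m×m principal submatrix satisfies det Δ_[m] = Σ_F a_F, where the sum runs over all well-rooted spanning forests F, i.e., cycle-and-well-rooted spanning forests with 𝒞(F) = ∅ (equivalently, functions f : U → V with f(i) ≠ i such that for every i ∈ U some iterate of f starting from i lands in the well W). -/

import Mathlib

/-!
The classical matrix-tree theorem (Kirchhoff): the principal minor `det Δ_[m]` of the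
untwisted Laplacian equals the weighted count of well-rooted spanning forests.
-/

open Finset Function

/-- Extension of `f : U → V` to all of `V = {1,…,n}`, fixing the well pointwise. -/
def extFun {n m : ℕ} (hmn : m ≤ n) (f : Fin m → Fin n) : Fin n → Fin n :=
  fun j => if h : (j : ℕ) < m then f ⟨(j : ℕ), h⟩ else j

lemma extFun_castLE {n m : ℕ} (hmn : m ≤ n) (f : Fin m → Fin n) (j : Fin m) :
    extFun hmn f (Fin.castLE hmn j) = f j := by
  simp [extFun, j.isLt]

/-- The `0/1` matrix `I - P_f` of a forest candidate. -/
def forestMat (K : Type*) [CommRing K] {n m : ℕ} (hmn : m ≤ n) (f : Fin m → Fin n) :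
    Matrix (Fin m) (Fin m) K :=
  Matrix.of fun i j : Fin m =>
    (if i = j then (1 : K) else 0) - (if f i = Fin.castLE hmn j then 1 else 0)

lemma det_forestMat_acyclic {K : Type*} [CommRing K] {n m : ℕ} (hmn : m ≤ n)
    (f : Fin m → Fin n) (hf : ∀ i, f i ≠ Fin.castLE hmn i)
    (hac : ∀ i : Fin m, ∃ k : ℕ, m ≤ ((extFun hmn f)^[k] (Fin.castLE hmn i) : ℕ)) :
    (forestMat K hmn f).det = 1 := by
  classical
  rw [Matrix.det_apply]
  rw [Finset.sum_eq_single (1 : Equiv.Perm (Fin m))]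
  · simp [forestMat, fun i => hf i]
  · intro σ _ hσ
    have hzero : ∃ i, forestMat K hmn f (σ i) i = 0 := by
      by_contra hcon
      push_neg at hcon
      have hrule : ∀ j, σ j ≠ j → f (σ j) = Fin.castLE hmn j := by
        intro j hj
        by_contra hne
        exact hcon j (by simp [forestMat, hj, hne])
      have hmoved : ∃ i, σ i ≠ i := by
        by_contra hall
        push_neg at hall
        exact hσ (Equiv.ext hall)
      obtain ⟨i0, hi0⟩ := hmoved
      set τ : Fin m → Fin m := fun j => σ⁻¹ j with hτ
      have key : ∀ k : ℕ, σ (τ^[k] i0) ≠ τ^[k] i0 ∧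
          (extFun hmn f)^[k] (Fin.castLE hmn i0) = Fin.castLE hmn (τ^[k] i0) := by
        intro k
        induction k with
        | zero => exact ⟨hi0, rfl⟩
        | succ k ih =>
          obtain ⟨hmov, heq⟩ := ih
          have hτs : τ^[k+1] i0 = σ⁻¹ (τ^[k] i0) := Function.iterate_succ_apply' τ k i0
          have hσinv : σ (τ^[k+1] i0) = τ^[k] i0 := by rw [hτs]; simp
          have hmov' : σ (τ^[k+1] i0) ≠ τ^[k+1] i0 := by
            rw [hσinv, hτs]
            intro h
            exact hmov (by conv_lhs => rw [h]; simp)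
          refine ⟨hmov', ?_⟩
          have : (extFun hmn f)^[k+1] (Fin.castLE hmn i0)
              = extFun hmn f ((extFun hmn f)^[k] (Fin.castLE hmn i0)) :=
            Function.iterate_succ_apply' _ _ _
          rw [this, heq, extFun_castLE]
          have := hrule (τ^[k+1] i0) hmov'
          rw [hσinv] at this
          exact this
      obtain ⟨k, hk⟩ := hac i0
      have := (key k).2
      rw [this] at hk
      simp only [Fin.coe_castLE] at hk
      exact absurd hk (Nat.not_le.2 (τ^[k] i0).isLt)
    obtain ⟨i, hz⟩ := hzero
    rw [Finset.prod_eq_zero (f := fun j => forestMat K hmn f (σ j) j) (Finset.mem_univ i) hz,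
      smul_zero]
  · intro h; exact absurd (Finset.mem_univ 1) h

lemma det_forestMat_cyclic {K : Type*} [CommRing K] {n m : ℕ} (hmn : m ≤ n)
    (f : Fin m → Fin n)
    (hcyc : ∃ i0 : Fin m, ∀ k : ℕ, ((extFun hmn f)^[k] (Fin.castLE hmn i0) : ℕ) < m) :
    (forestMat K hmn f).det = 0 := by
  classical
  obtain ⟨i0, hlt⟩ := hcyc
  set g : Fin n → Fin n := extFun hmn f with hg
  set x0 : Fin n := Fin.castLE hmn i0 with hx0
  set s : ℕ → Fin m := fun k => ⟨((g^[k]) x0 : ℕ), hlt k⟩ with hsdef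
  have hs : ∀ k, Fin.castLE hmn (s k) = g^[k] x0 := fun k => Fin.ext rfl
  have hsiff : ∀ q q', s q = s q' ↔ g^[q] x0 = g^[q'] x0 := by
    intro q q'
    constructor
    · intro h
      have := congrArg (Fin.castLE hmn) h
      rwa [hs, hs] at this
    · intro h
      apply Fin.ext
      simp only [hsdef]
      exact congrArg Fin.val h
  have hstep : ∀ k, f (s k) = Fin.castLE hmn (s (k+1)) := by
    intro k
    calc f (s k) = g (Fin.castLE hmn (s k)) := (extFun_castLE hmn f (s k)).symm
      _ = g (g^[k] x0) := by rw [hs]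
      _ = g^[k+1] x0 := (Function.iterate_succ_apply' g k x0).symm
      _ = Fin.castLE hmn (s (k+1)) := (hs (k+1)).symm
  -- pigeonhole
  obtain ⟨u, v, huv, hsuv⟩ := Finite.exists_ne_map_eq_of_infinite s
  have hex : ∃ p, 0 < p ∧ s ((min u v) + p) = s (min u v) := by
    rcases huv.lt_or_gt with h | h
    · exact ⟨v - u, by omega, by rw [min_eq_left h.le, Nat.add_sub_cancel' h.le]; exact hsuv.symm⟩
    · exact ⟨u - v, by omega, by rw [min_eq_right h.le, Nat.add_sub_cancel' h.le]; exact hsuv⟩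
  set k := min u v
  set p := Nat.find hex with hpdef
  obtain ⟨hp0, hpeq⟩ : 0 < p ∧ s (k + p) = s k := Nat.find_spec hex
  have hgp : g^[k+p] x0 = g^[k] x0 := (hsiff _ _).1 hpeq
  have hiter : ∀ a b : ℕ, g^[a + b] x0 = g^[a] (g^[b] x0) := by
    intro a b; exact Function.iterate_add_apply g a b x0
  -- injectivity of t ↦ s (k+t) on range p
  have hinjaux : ∀ t1 t2, t1 < t2 → t2 < p → s (k + t1) ≠ s (k + t2) := by
    intro t1 t2 h12 h2p heq
    have h1 : g^[k + t1] x0 = g^[k + t2] x0 := (hsiff _ _).1 heq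
    have h2 : g^[(p - t2) + (k + t1)] x0 = g^[(p - t2) + (k + t2)] x0 := by
      rw [Function.iterate_add_apply g (p - t2) (k + t1) x0,
        Function.iterate_add_apply g (p - t2) (k + t2) x0, h1]
    have h3 : (p - t2) + (k + t2) = k + p := by omega
    have h4 : (p - t2) + (k + t1) = k + (t1 + (p - t2)) := by omega
    rw [h3, h4, hgp] at h2
    have hq : s (k + (t1 + (p - t2))) = s k := (hsiff _ _).2 h2
    have hqlt : t1 + (p - t2) < p := by omega
    exact Nat.find_min hex hqlt ⟨by omega, hq⟩
  have hinj : ∀ t1 ∈ Finset.range p, ∀ t2 ∈ Finset.range p,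
      s (k + t1) = s (k + t2) → t1 = t2 := by
    intro t1 h1 t2 h2 heq
    rcases lt_trichotomy t1 t2 with h | h | h
    · exact absurd heq (hinjaux t1 t2 h (Finset.mem_range.1 h2))
    · exact h
    · exact absurd heq.symm (hinjaux t2 t1 h (Finset.mem_range.1 h1))
  set C : Finset (Fin m) := (Finset.range p).image (fun t => s (k + t)) with hC
  set c : Fin m → K := fun i => if i ∈ C then (1 : K) else 0 with hc
  have hrow : (∑ i, c i • forestMat K hmn f i) = 0 := by
    funext j
    simp only [Finset.sum_apply, Pi.smul_apply, smul_eq_mul, Pi.zero_apply, hc]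
    have hstep1 : ∑ i : Fin m, (if i ∈ C then (1:K) else 0) * forestMat K hmn f i j
        = ∑ i : Fin m, if i ∈ C then forestMat K hmn f i j else 0 :=
      Finset.sum_congr rfl (fun i _ => by rw [ite_mul, one_mul, zero_mul])
    rw [hstep1]
    rw [Finset.sum_ite_mem, Finset.univ_inter, hC, Finset.sum_image hinj]
    have : ∀ t, forestMat K hmn f (s (k + t)) j
        = (if s (k + t) = j then (1:K) else 0) - (if s (k + (t + 1)) = j then 1 else 0) := by
      intro t
      have hst : f (s (k + t)) = Fin.castLE hmn (s (k + (t + 1))) := hstep (k + t)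
      have h2 : (f (s (k + t)) = Fin.castLE hmn j) ↔ (s (k + (t + 1)) = j) := by
        rw [hst]
        exact ⟨fun h => Fin.castLE_injective hmn h, fun h => by rw [h]⟩
      simp only [forestMat, Matrix.of_apply]
      congr 1
      simp [h2]
    rw [Finset.sum_congr rfl (fun t _ => this t)]
    rw [Finset.sum_range_sub' (fun t => if s (k + t) = j then (1:K) else 0) p]
    simp [hpeq]
  have hck : c (s k) = 1 := by
    have : s k ∈ C := by
      rw [hC]
      exact Finset.mem_image.2 ⟨0, Finset.mem_range.2 hp0, by rw [Nat.add_zero]⟩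
    simp [hc, this]
  have hupd := Matrix.det_updateRow_sum (forestMat K hmn f) (s k) c
  rw [hrow, hck, one_smul] at hupd
  rw [← hupd]
  apply Matrix.det_eq_zero_of_row_eq_zero (s k)
  intro j
  rw [Matrix.updateRow_self]
  rfl

open scoped Classical in
lemma det_forestMat {K : Type*} [CommRing K] {n m : ℕ} (hmn : m ≤ n)
    (f : Fin m → Fin n) (hf : ∀ i, f i ≠ Fin.castLE hmn i) :
    (forestMat K hmn f).det =
      if (∀ i : Fin m, ∃ k : ℕ, m ≤ ((extFun hmn f)^[k] (Fin.castLE hmn i) : ℕ)) then 1 else 0 := by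
  classical
  split_ifs with h
  · exact det_forestMat_acyclic hmn f hf h
  · push_neg at h
    apply det_forestMat_cyclic hmn f
    obtain ⟨i0, hi0⟩ := h
    exact ⟨i0, hi0⟩

theorem stmt6 {K : Type*} [CommRing K]
    (n m : ℕ) (hn : 2 ≤ n) (hm : 1 ≤ m) (hmn : m ≤ n)
    (a : Fin n → Fin n → K) :
    Matrix.det
      ((Matrix.of fun i j : Fin n =>
          if i = j then ∑ k ∈ Finset.univ.filter fun k => k ≠ i, a i k
          else - a i j).submatrix (Fin.castLE hmn) (Fin.castLE hmn)) =
    ∑ f ∈ @Finset.filter {f : Fin m → Fin n // ∀ i, f i ≠ Fin.castLE hmn i}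
        (fun f => ∀ i : Fin m, ∃ k : ℕ, m ≤ ((extFun hmn f.1)^[k] (Fin.castLE hmn i) : ℕ))
        (Classical.decPred _) Finset.univ,
      ∏ i : Fin m, a (Fin.castLE hmn i) (f.1 i) := by
  classical
  set A : Fin m → Finset (Fin n) := fun i => Finset.univ.filter fun k => k ≠ Fin.castLE hmn i with hA
  set g : ∀ _ : Fin m, Fin n → (Fin m → K) := fun i k =>
    fun j => a (Fin.castLE hmn i) k *
      ((if i = j then (1 : K) else 0) - (if k = Fin.castLE hmn j then 1 else 0)) with hgdef
  have hM : ((Matrix.of fun i j : Fin n =>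
          if i = j then ∑ k ∈ Finset.univ.filter fun k => k ≠ i, a i k
          else - a i j).submatrix (Fin.castLE hmn) (Fin.castLE hmn))
      = Matrix.of (fun i => ∑ k ∈ A i, g i k) := by
    ext i j
    simp only [Matrix.submatrix_apply, Matrix.of_apply, hA, hgdef]
    by_cases hij : i = j
    · subst hij
      rw [if_pos rfl, Finset.sum_apply]
      apply Finset.sum_congr rfl
      intro k hk
      have hk' : k ≠ Fin.castLE hmn i := (Finset.mem_filter.1 hk).2
      simp [hk']
    · have hij' : Fin.castLE hmn i ≠ Fin.castLE hmn j :=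
        fun h => hij (Fin.castLE_injective hmn h)
      rw [if_neg hij', Finset.sum_apply]
      have : ∀ k ∈ Finset.univ.filter (fun k => k ≠ Fin.castLE hmn i),
          a (Fin.castLE hmn i) k *
            ((if i = j then (1 : K) else 0) - (if k = Fin.castLE hmn j then 1 else 0))
          = if k = Fin.castLE hmn j then -a (Fin.castLE hmn i) k else 0 := by
        intro k _
        rw [if_neg hij]
        by_cases h : k = Fin.castLE hmn j <;> simp [h]
      rw [Finset.sum_congr rfl this, Finset.sum_ite_eq' _ (Fin.castLE hmn j)
        (fun k => -a (Fin.castLE hmn i) k)]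
      rw [if_pos (by simp [Ne.symm hij'])]
  rw [hM]
  have hdet1 : Matrix.det (Matrix.of (fun i => ∑ k ∈ A i, g i k))
      = (Matrix.detRowAlternating :
          (Fin m → K) [⋀^Fin m]→ₗ[K] K).toMultilinearMap (fun i => ∑ k ∈ A i, g i k) := rfl
  rw [hdet1]
  rw [(Matrix.detRowAlternating :
      (Fin m → K) [⋀^Fin m]→ₗ[K] K).toMultilinearMap.map_sum_finset g A]
  -- evaluate each summand
  have hterm : ∀ r ∈ Fintype.piFinset A,
      (Matrix.detRowAlternating :
          (Fin m → K) [⋀^Fin m]→ₗ[K] K).toMultilinearMap (fun i => g i (r i))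
        = (∏ i : Fin m, a (Fin.castLE hmn i) (r i)) *
          (if (∀ i : Fin m, ∃ k : ℕ, m ≤ ((extFun hmn r)^[k] (Fin.castLE hmn i) : ℕ))
            then 1 else 0) := by
    intro r hr
    have hrne : ∀ i, r i ≠ Fin.castLE hmn i := by
      intro i
      have := Fintype.mem_piFinset.1 hr i
      exact (Finset.mem_filter.1 this).2
    have hfactor : (fun i => g i (r i))
        = fun i => (a (Fin.castLE hmn i) (r i)) • (forestMat K hmn r i) := by
      funext i j
      simp [hgdef, forestMat, smul_eq_mul]
    rw [hfactor]
    rw [(Matrix.detRowAlternating :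
        (Fin m → K) [⋀^Fin m]→ₗ[K] K).toMultilinearMap.map_smul_univ
        (fun i => a (Fin.castLE hmn i) (r i)) (forestMat K hmn r)]
    have : (Matrix.detRowAlternating :
        (Fin m → K) [⋀^Fin m]→ₗ[K] K).toMultilinearMap (forestMat K hmn r)
        = (forestMat K hmn r).det := rfl
    rw [smul_eq_mul, this, det_forestMat hmn r hrne]
  rw [Finset.sum_congr rfl hterm]
  have hmem : ∀ r : Fin m → Fin n,
      r ∈ Fintype.piFinset A ↔ ∀ i, r i ≠ Fin.castLE hmn i := by
    intro r
    simp [hA, Fintype.mem_piFinset]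
  rw [Finset.sum_subtype (Fintype.piFinset A) hmem
    (fun r => (∏ i : Fin m, a (Fin.castLE hmn i) (r i)) *
      (if (∀ i : Fin m, ∃ k : ℕ, m ≤ ((extFun hmn r)^[k] (Fin.castLE hmn i) : ℕ))
        then 1 else 0))]
  rw [Finset.sum_filter]
  apply Finset.sum_congr rfl
  intro r _
  by_cases h : ∀ i : Fin m, ∃ k : ℕ, m ≤ ((extFun hmn r.1)^[k] (Fin.castLE hmn i) : ℕ)
  · simp [h]
  · simp [h]
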